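/- Let r ∈ {2, 3, 4}, let k ≥ 0 be an integer, and let L = (a, b) ∈ ℤ × (Fin r → ℤ). Then ⟨L, ξ⟩ ≥ k for every exceptional class ξ ∈ E_r if and only if b_i ≥ k for all i and a ≥ b_i + b_j + k for all pairs of distinct indices i ≠ j. -/

import Mathlib

/-- The intersection pairing on `Λ_r = ℤ × (Fin r → ℤ)`:
`⟨(a,b),(d,m)⟩ = a·d - ∑ bᵢ·mᵢ`. -/
def pairing {r : ℕ} (L ξ : ℤ × (Fin r → ℤ)) : ℤ :=
  L.1 * ξ.1 - ∑ i, L.2 i * ξ.2 i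

/-- A class `(d, m)` in `Λ_r` is exceptional if `d² - ∑ mᵢ² = -1` and
`3d - ∑ mᵢ = 1`. -/
def IsExc {r : ℕ} (p : ℤ × (Fin r → ℤ)) : Prop :=
  p.1 ^ 2 - ∑ i, (p.2 i) ^ 2 = -1 ∧ 3 * p.1 - ∑ i, p.2 i = 1

lemma int_mul_succ_nonneg (t : ℤ) : 0 ≤ t * (t + 1) := by
  rcases le_or_gt 0 t with h | h
  · exact mul_nonneg h (by omega)
  · have : (0:ℤ) ≤ (-t) * (-(t+1)) := mul_nonneg (by omega) (by omega)
    nlinarith [this]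

lemma int_mul_pred_nonneg (t : ℤ) : 0 ≤ t * (t - 1) := by
  rcases le_or_gt 1 t with h | h
  · exact mul_nonneg (by omega) (by omega)
  · have : (0:ℤ) ≤ (-t) * (-(t-1)) := mul_nonneg (by omega) (by omega)
    nlinarith [this]

/-- for `r ∈ {2,3,4}` and `k ≥ 0`, a class `L = (a, b)` satisfies
`⟨L, ξ⟩ ≥ k` for every exceptional class `ξ` iff `bᵢ ≥ k` for all `i` and
`a ≥ bᵢ + bⱼ + k` for all `i ≠ j`. -/
theorem k_very_ample_criterion_r234 (r : ℕ) (hr : r = 2 ∨ r = 3 ∨ r = 4)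
    (k : ℤ) (hk : 0 ≤ k) (a : ℤ) (b : Fin r → ℤ) :
    (∀ ξ : ℤ × (Fin r → ℤ), IsExc ξ → k ≤ pairing (a, b) ξ) ↔
      ((∀ i, k ≤ b i) ∧
       (∀ i j, i ≠ j → b i + b j + k ≤ a)) := by
  have hr4 : (r : ℤ) ≤ 4 := by rcases hr with h | h | h <;> simp [h]
  constructor
  · intro H
    constructor
    · intro i
      have h := H (0, fun t => if t = i then -1 else 0) ?_
      · have hp : pairing (a, b) (0, fun t => if t = i then (-1:ℤ) else 0) = b i := by
          simp [pairing, mul_ite, Finset.sum_ite_eq']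
        rw [hp] at h; exact h
      · constructor
        · have he : ∀ t : Fin r, ((if t = i then (-1:ℤ) else 0))^2 = if t = i then 1 else 0 := by
            intro t; split <;> norm_num
          simp only [he]
          simp [Finset.sum_ite_eq']
        · simp [Finset.sum_ite_eq']
    · intro i j hij
      have h := H (1, fun t => (if t = i then (1:ℤ) else 0) + (if t = j then 1 else 0)) ?_
      · have hp : pairing (a, b)
            (1, fun t => (if t = i then (1:ℤ) else 0) + (if t = j then 1 else 0))
            = a - b i - b j := by
          have hbm : ∀ t : Fin r,
              b t * ((if t = i then (1:ℤ) else 0) + (if t = j then 1 else 0))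
              = (if t = i then b i else 0) + (if t = j then b j else 0) := by
            intro t
            rcases eq_or_ne t i with rfl | h1
            · rw [if_pos rfl, if_pos rfl, if_neg hij, if_neg hij]; ring
            · rcases eq_or_ne t j with rfl | h2
              · rw [if_neg h1, if_neg h1, if_pos rfl, if_pos rfl]; ring
              · rw [if_neg h1, if_neg h1, if_neg h2, if_neg h2]; ring
          simp only [pairing, hbm, Finset.sum_add_distrib, Finset.sum_ite_eq',
            Finset.mem_univ, if_pos, mul_one]
          ring
        rw [hp] at h; linarith
      · have hmsq : ∀ t : Fin r,
            ((if t = i then (1:ℤ) else 0) + (if t = j then 1 else 0))^2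
            = (if t = i then (1:ℤ) else 0) + (if t = j then 1 else 0) := by
          intro t
          rcases eq_or_ne t i with rfl | h1
          · rw [if_pos rfl, if_neg hij]; ring
          · rcases eq_or_ne t j with rfl | h2
            · rw [if_neg h1, if_pos rfl]; ring
            · rw [if_neg h1, if_neg h2]; ring
        have hsum : ∑ t : Fin r,
            ((if t = i then (1:ℤ) else 0) + (if t = j then 1 else 0)) = 2 := by
          rw [Finset.sum_add_distrib]
          simp [Finset.sum_ite_eq']
        constructor
        · simp only [hmsq]; rw [hsum]; norm_num
        · simp only []; rw [hsum]; norm_num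
  · rintro ⟨hb, hab⟩ ⟨d, m⟩ ⟨h1, h2⟩
    simp only at h1 h2
    have hm2 : ∑ i, (m i)^2 = d^2 + 1 := by linarith
    have hm1 : ∑ i, m i = 3*d - 1 := by linarith
    have cs := Finset.sum_mul_sq_le_sq_mul_sq Finset.univ (fun _ => (1:ℤ)) m
    simp only [one_mul, one_pow, Finset.sum_const, Finset.card_univ, Fintype.card_fin,
      nsmul_eq_mul] at cs
    rw [hm1, hm2] at cs
    have h5 : (3*d-1)^2 ≤ 4 * (d^2+1) := le_trans cs (by nlinarith [sq_nonneg d])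
    have hge : 0 ≤ d := by nlinarith [sq_nonneg (d+1)]
    have hle : d ≤ 1 := by nlinarith [sq_nonneg (d-2)]
    have hd : d = 0 ∨ d = 1 := by omega
    rcases hd with rfl | rfl
    · -- d = 0 : ∑ m = -1, ∑ m² = 1; each m i ∈ {-1, 0}
      norm_num at hm1 hm2
      have hz : ∑ i, m i * (m i + 1) = 0 := by
        have he : ∑ i, m i * (m i + 1) = ∑ i, ((m i)^2 + m i) := by
          apply Finset.sum_congr rfl; intro t _; ring
        rw [he, Finset.sum_add_distrib, hm1, hm2]; ring
      have hpt : ∀ t : Fin r, m t = 0 ∨ m t = -1 := by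
        intro t
        have := (Finset.sum_eq_zero_iff_of_nonneg
          (fun i _ => int_mul_succ_nonneg (m i))).mp hz t (Finset.mem_univ t)
        rcases mul_eq_zero.mp this with h | h
        · left; exact h
        · right; omega
      set S := Finset.univ.filter (fun t => m t = -1) with hS
      have hcard : (S.card : ℤ) = 1 := by
        have hsplit := Finset.sum_filter_add_sum_filter_not Finset.univ
          (fun t => m t = -1) m
        have hL : ∑ t ∈ S, m t = -(S.card : ℤ) := by
          rw [Finset.sum_congr rfl (fun t ht => (Finset.mem_filter.mp ht).2)]
          simp [mul_comm]
          rfl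
        have hR : ∑ t ∈ Finset.univ.filter (fun t => ¬ m t = -1), m t = 0 := by
          apply Finset.sum_eq_zero
          intro t ht
          have hnt := (Finset.mem_filter.mp ht).2
          rcases hpt t with h | h
          · exact h
          · exact absurd h hnt
        rw [hL, hR, hm1] at hsplit
        omega
      obtain ⟨i0, hi0⟩ := Finset.card_eq_one.mp (by exact_mod_cast hcard)
      have hmi0 : m i0 = -1 := by
        have : i0 ∈ S := hi0 ▸ Finset.mem_singleton_self i0
        exact (Finset.mem_filter.mp this).2
      have hrest : ∀ t, t ≠ i0 → m t = 0 := by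
        intro t ht
        rcases hpt t with h | h
        · exact h
        · exfalso
          have : t ∈ S := Finset.mem_filter.mpr ⟨Finset.mem_univ t, h⟩
          rw [hi0, Finset.mem_singleton] at this
          exact ht this
      have hp : pairing (a, b) (0, m) = b i0 := by
        simp only [pairing, mul_zero, zero_sub]
        rw [Finset.sum_eq_single i0]
        · rw [hmi0]; ring
        · intro t _ ht; rw [hrest t ht, mul_zero]
        · intro h; exact absurd (Finset.mem_univ i0) h
      rw [hp]; exact hb i0
    · -- d = 1 : ∑ m = 2, ∑ m² = 2; each m i ∈ {0, 1}
      norm_num at hm1 hm2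
      have hz : ∑ i, m i * (m i - 1) = 0 := by
        have he : ∑ i, m i * (m i - 1) = ∑ i, ((m i)^2 - m i) := by
          apply Finset.sum_congr rfl; intro t _; ring
        rw [he, Finset.sum_sub_distrib, hm1, hm2]; ring
      have hpt : ∀ t : Fin r, m t = 0 ∨ m t = 1 := by
        intro t
        have := (Finset.sum_eq_zero_iff_of_nonneg
          (fun i _ => int_mul_pred_nonneg (m i))).mp hz t (Finset.mem_univ t)
        rcases mul_eq_zero.mp this with h | h
        · left; exact h
        · right; omega
      set S := Finset.univ.filter (fun t => m t = 1) with hS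
      have hcard : (S.card : ℤ) = 2 := by
        have hsplit := Finset.sum_filter_add_sum_filter_not Finset.univ
          (fun t => m t = 1) m
        have hL : ∑ t ∈ S, m t = (S.card : ℤ) := by
          rw [Finset.sum_congr rfl (fun t ht => (Finset.mem_filter.mp ht).2)]
          simp [mul_comm]
          rfl
        have hR : ∑ t ∈ Finset.univ.filter (fun t => ¬ m t = 1), m t = 0 := by
          apply Finset.sum_eq_zero
          intro t ht
          have hnt := (Finset.mem_filter.mp ht).2
          rcases hpt t with h | h
          · exact h
          · exact absurd h hnt
        rw [hL, hR, hm1] at hsplit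
        omega
      obtain ⟨i0, j0, hij, hij2⟩ := Finset.card_eq_two.mp (by exact_mod_cast hcard)
      have hmi0 : m i0 = 1 := by
        have : i0 ∈ S := by rw [hij2]; simp
        exact (Finset.mem_filter.mp this).2
      have hmj0 : m j0 = 1 := by
        have : j0 ∈ S := by rw [hij2]; simp
        exact (Finset.mem_filter.mp this).2
      have hrest : ∀ t, t ≠ i0 → t ≠ j0 → m t = 0 := by
        intro t ht1 ht2
        rcases hpt t with h | h
        · exact h
        · exfalso
          have : t ∈ S := Finset.mem_filter.mpr ⟨Finset.mem_univ t, h⟩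
          rw [hij2] at this
          simp only [Finset.mem_insert, Finset.mem_singleton] at this
          tauto
      have hbm : ∀ t : Fin r, b t * m t
          = (if t = i0 then b i0 else 0) + (if t = j0 then b j0 else 0) := by
        intro t
        rcases eq_or_ne t i0 with rfl | h1
        · rw [hmi0, if_pos rfl, if_neg hij, mul_one, add_zero]
        · rcases eq_or_ne t j0 with rfl | h2
          · rw [hmj0, if_neg h1, if_pos rfl, mul_one, zero_add]
          · rw [hrest t h1 h2, mul_zero, if_neg h1, if_neg h2, add_zero]
      have hp : pairing (a, b) (1, m) = a - (b i0 + b j0) := by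
        simp only [pairing, mul_one, hbm, Finset.sum_add_distrib, Finset.sum_ite_eq']
        simp
      rw [hp]
      have := hab i0 j0 hij
      linarith
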